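/- Let χ : ℝ → ℝ be a C¹, compactly supported function satisfying χ(ω)=χ(−ω) ≥ 0, ∫χ = 1 and ∫ω²χ = 1. Let γ>1, k>0, ρ₀>0, g>0, θ∈ℝ, S, Z C¹, and let M, D, A, Q : ℝ×ℝ→ℝ be C¹ with M>0, A>0, S−A>0. Set c_a² = kγ(ρ₀M/(S−A))^{γ−1}, b_a² = c_a²/γ, b_w² = (g I₁/A)cosθ + c_a²M/(γ(S−A)) (assumed positive), v=D/M, u=Q/A, ℳ_a = (M/b_a)χ((ξ−v)/b_a), ℳ_w = (A/b_w)χ((ξ−u)/b_w), φ_a = (c_a²/(γ(S−A)))∂ₓ(S−A), φ_w = −g∂ₓZ + (g I₂/A)cosθ + (c_a²M/(γ(S−A)))·(∂ₓA)/A. Assume that for α ∈ {a,w} there exist functions K_α(t,x,ξ) with ∂ₜℳ_α + ξ∂ₓℳ_α + φ_α ∂_ξℳ_α = K_α and ∫_ℝ K_α dξ = 0, ∫_ℝ ξ K_α dξ = 0 for a.e. (t,x). Then (M,D,A,Q) is a solution of the two-layer system: ∂ₜM+∂ₓD=0; ∂ₜD+∂ₓ(D²/M + M c_a²/γ) = (M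 c_a²/(γ(S−A)))∂ₓ(S−A); ∂ₜA+∂ₓQ=0; ∂ₜQ+∂ₓ(Q²/A + g I₁ cosθ + A M c_a²/(γ(S−A))) = −gA∂ₓZ + g I₂ cosθ + (M c_a²/(γ(S−A)))∂ₓA. -/

import Mathlib

open Real MeasureTheory

/-- Partial derivative with respect to the first (time) variable. -/
noncomputable def pt (f : ℝ → ℝ → ℝ) (t x : ℝ) : ℝ := deriv (fun s => f s x) t

/-- Partial derivative with respect to the second (space) variable. -/
noncomputable def px (f : ℝ → ℝ → ℝ) (t x : ℝ) : ℝ := deriv (fun y => f t y) x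

/-- Partial time derivative of a function of `(t, x, ξ)`. -/
noncomputable def kt (f : ℝ → ℝ → ℝ → ℝ) (t x ξ : ℝ) : ℝ :=
  deriv (fun s => f s x ξ) t

/-- Partial space derivative of a function of `(t, x, ξ)`. -/
noncomputable def kx (f : ℝ → ℝ → ℝ → ℝ) (t x ξ : ℝ) : ℝ :=
  deriv (fun y => f t y ξ) x

/-- Partial kinetic-velocity derivative of a function of `(t, x, ξ)`. -/
noncomputable def kv (f : ℝ → ℝ → ℝ → ℝ) (t x ξ : ℝ) : ℝ :=
  deriv (fun ζ => f t x ζ) ξ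



lemma tl_integral_deriv_eq_zero {f : ℝ → ℝ} (hf : ContDiff ℝ 1 f)
    (hs : HasCompactSupport f) : ∫ x, deriv f x = 0 := by
  have hint : Integrable (deriv f) :=
    (hf.continuous_deriv le_rfl).integrable_of_hasCompactSupport hs.deriv
  have h := intervalIntegral.integral_Iic_add_Ioi (b := (0:ℝ)) (μ := volume)
      hint.integrableOn hint.integrableOn
  rw [← h, hs.integral_Iic_deriv_eq hf 0, hs.integral_Ioi_deriv_eq hf 0]
  ring

lemma tl_integral_odd {f : ℝ → ℝ} (hodd : ∀ x, f (-x) = - f x) : ∫ x, f x = 0 := by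
  have h : (∫ x, f x) = - ∫ x, f x := by
    conv_lhs => rw [← integral_neg_eq_self f (volume : Measure ℝ)]
    simp only [hodd]
    exact integral_neg f
  linarith

lemma tl_integrable_mul {χ : ℝ → ℝ} (hc : Continuous χ) (hs : HasCompactSupport χ)
    {p : ℝ → ℝ} (hp : Continuous p) : Integrable (fun ω => p ω * χ ω) :=
  (hp.mul hc).integrable_of_hasCompactSupport hs.mul_left

lemma tl_integral_pow_mul_deriv {χ : ℝ → ℝ} (hχ : ContDiff ℝ 1 χ)
    (hs : HasCompactSupport χ) (n : ℕ) :
    ∫ ω, ω ^ (n + 1) * deriv χ ω = -((n:ℝ) + 1) * ∫ ω, ω ^ n * χ ω := by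
  have hχ' : Continuous (deriv χ) := hχ.continuous_deriv le_rfl
  have hgd : ∀ ω : ℝ, HasDerivAt (fun ω => ω ^ (n+1) * χ ω)
      (((n:ℝ)+1) * ω ^ n * χ ω + ω ^ (n+1) * deriv χ ω) ω := by
    intro ω
    have h1 := hasDerivAt_pow (n+1) ω
    have h2 := ((hχ.differentiable one_ne_zero) ω).hasDerivAt
    have := h1.fun_mul h2
    simpa using this
  have hg : ContDiff ℝ 1 (fun ω : ℝ => ω ^ (n+1) * χ ω) :=
    (contDiff_id.pow (n+1)).mul hχ
  have hgs : HasCompactSupport (fun ω : ℝ => ω ^ (n+1) * χ ω) := hs.mul_left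
  have hzero : ∫ ω, deriv (fun ω : ℝ => ω ^ (n+1) * χ ω) ω = 0 :=
    tl_integral_deriv_eq_zero hg hgs
  have hrw : (fun ω : ℝ => deriv (fun ω : ℝ => ω ^ (n+1) * χ ω) ω)
      = fun ω : ℝ => ((n:ℝ)+1) * ω ^ n * χ ω + ω ^ (n+1) * deriv χ ω :=
    funext fun ω => (hgd ω).deriv
  rw [hrw] at hzero
  have i1 : Integrable (fun ω : ℝ => ((n:ℝ)+1) * ω ^ n * χ ω) := by
    have := tl_integrable_mul hχ.continuous hs
        (p := fun ω : ℝ => ((n:ℝ)+1) * ω ^ n) (by continuity)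
    simpa [mul_assoc] using this
  have i2 : Integrable (fun ω : ℝ => ω ^ (n+1) * deriv χ ω) :=
    tl_integrable_mul hχ' hs.deriv (by continuity)
  rw [integral_add i1 i2] at hzero
  have : (∫ ω, ((n:ℝ)+1) * ω ^ n * χ ω) = ((n:ℝ)+1) * ∫ ω, ω ^ n * χ ω := by
    simp_rw [mul_assoc]
    exact integral_const_mul _ _
  rw [this] at hzero
  linarith



lemma tl_gibbs_hasDerivAt {χ : ℝ → ℝ} (hχ : ContDiff ℝ 1 χ) {a b uu : ℝ → ℝ}
    {a' b' u' s : ℝ} (ha : HasDerivAt a a' s) (hb : HasDerivAt b b' s)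
    (hu : HasDerivAt uu u' s) (hbne : b s ≠ 0) (ξ : ℝ) :
    HasDerivAt (fun r => a r / b r * χ ((ξ - uu r) / b r))
      ((a' * b s - a s * b') / b s ^ 2 * χ ((ξ - uu s) / b s)
        + a s / b s * (deriv χ ((ξ - uu s) / b s)
          * ((-u' * b s - (ξ - uu s) * b') / b s ^ 2))) s := by
  have h1 : HasDerivAt (fun r => a r / b r) ((a' * b s - a s * b') / b s ^ 2) s :=
    ha.div hb hbne
  have hin : HasDerivAt (fun r => (ξ - uu r) / b r)
      ((-u' * b s - (ξ - uu s) * b') / b s ^ 2) s := by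
    have hnum : HasDerivAt (fun r => ξ - uu r) (-u') s := hu.const_sub ξ
    exact hnum.div hb hbne
  have hχd : HasDerivAt χ (deriv χ ((ξ - uu s) / b s)) ((ξ - uu s) / b s) :=
    ((hχ.differentiable one_ne_zero) _).hasDerivAt
  exact h1.mul (hχd.comp s hin)

lemma tl_gibbs_hasDerivAt_v {χ : ℝ → ℝ} (hχ : ContDiff ℝ 1 χ) (Av Bv Uv : ℝ)
    (hB : Bv ≠ 0) (ξ : ℝ) :
    HasDerivAt (fun ζ => Av / Bv * χ ((ζ - Uv) / Bv))
      (Av / Bv * (deriv χ ((ξ - Uv) / Bv) * (1 / Bv))) ξ := by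
  have hin : HasDerivAt (fun ζ : ℝ => (ζ - Uv) / Bv) (1 / Bv) ξ := by
    simpa using ((hasDerivAt_id ξ).sub_const Uv).div_const Bv
  have hχd : HasDerivAt χ (deriv χ ((ξ - Uv) / Bv)) ((ξ - Uv) / Bv) :=
    ((hχ.differentiable one_ne_zero) _).hasDerivAt
  exact (hχd.comp ξ hin).const_mul (Av / Bv)

lemma tl_integral_comp_affine {F : ℝ → ℝ} (hF : Integrable F) {B : ℝ} (hB : 0 < B)
    (U : ℝ) : ∫ ξ, F ((ξ - U) / B) = B * ∫ ω, F ω := by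
  have h1 : ∀ ξ : ℝ, F ((ξ - U) / B) = (fun y => F (y / B)) (ξ + -U) := by
    intro ξ; simp [sub_eq_add_neg]
  calc (∫ ξ, F ((ξ - U) / B)) = ∫ ξ, (fun y => F (y / B)) (ξ + -U) := by simp_rw [h1]
    _ = ∫ y, F (y / B) := integral_add_right_eq_self (μ := volume) (fun y => F (y / B)) (-U)
    _ = |B| • ∫ ω, F ω := Measure.integral_comp_div _ _
    _ = B * ∫ ω, F ω := by rw [abs_of_pos hB, smul_eq_mul]


lemma tl_sliceT_diff {f : ℝ → ℝ → ℝ} (hf : ContDiff ℝ 1 (Function.uncurry f))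
    (t x : ℝ) : DifferentiableAt ℝ (fun s => f s x) t := by
  have h : (fun s => f s x) = Function.uncurry f ∘ fun s => (s, x) := rfl
  rw [h]
  exact ((hf.differentiable one_ne_zero) (t, x)).comp t
    (differentiableAt_id.prodMk (differentiableAt_const x))

lemma tl_sliceX_diff {f : ℝ → ℝ → ℝ} (hf : ContDiff ℝ 1 (Function.uncurry f))
    (t x : ℝ) : DifferentiableAt ℝ (fun y => f t y) x := by
  have h : (fun y => f t y) = Function.uncurry f ∘ fun y => (t, y) := rfl
  rw [h]
  exact ((hf.differentiable one_ne_zero) (t, x)).comp x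
    ((differentiableAt_const t).prodMk differentiableAt_id)

lemma tl_pt_eq_fderiv {f : ℝ → ℝ → ℝ} (hf : ContDiff ℝ 1 (Function.uncurry f))
    (t x : ℝ) : pt f t x = fderiv ℝ (Function.uncurry f) (t, x) (1, 0) := by
  have h1 : HasDerivAt (fun s : ℝ => (s, x)) ((1 : ℝ), (0 : ℝ)) t :=
    (hasDerivAt_id t).prodMk (hasDerivAt_const t x)
  have h2 := (((hf.differentiable one_ne_zero) (t, x)).hasFDerivAt).comp_hasDerivAt t h1
  show deriv (fun s => f s x) t = _
  exact h2.deriv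

lemma tl_px_eq_fderiv {f : ℝ → ℝ → ℝ} (hf : ContDiff ℝ 1 (Function.uncurry f))
    (t x : ℝ) : px f t x = fderiv ℝ (Function.uncurry f) (t, x) (0, 1) := by
  have h1 : HasDerivAt (fun y : ℝ => (t, y)) ((0 : ℝ), (1 : ℝ)) x :=
    (hasDerivAt_const x t).prodMk (hasDerivAt_id x)
  have h2 := (((hf.differentiable one_ne_zero) (t, x)).hasFDerivAt).comp_hasDerivAt x h1
  show deriv (fun y => f t y) x = _
  exact h2.deriv

lemma tl_pt_cont {f : ℝ → ℝ → ℝ} (hf : ContDiff ℝ 1 (Function.uncurry f)) :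
    Continuous (fun p : ℝ × ℝ => pt f p.1 p.2) := by
  have h : (fun p : ℝ × ℝ => pt f p.1 p.2)
      = fun p : ℝ × ℝ => fderiv ℝ (Function.uncurry f) p (1, 0) := by
    funext p
    rw [tl_pt_eq_fderiv hf p.1 p.2]
  rw [h]
  exact (hf.continuous_fderiv one_ne_zero).clm_apply continuous_const

lemma tl_px_cont {f : ℝ → ℝ → ℝ} (hf : ContDiff ℝ 1 (Function.uncurry f)) :
    Continuous (fun p : ℝ × ℝ => px f p.1 p.2) := by
  have h : (fun p : ℝ × ℝ => px f p.1 p.2)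
      = fun p : ℝ × ℝ => fderiv ℝ (Function.uncurry f) p (0, 1) := by
    funext p
    rw [tl_px_eq_fderiv hf p.1 p.2]
  rw [h]
  exact (hf.continuous_fderiv one_ne_zero).clm_apply continuous_const


lemma tl_layer_moments
    {χ : ℝ → ℝ} (hχreg : ContDiff ℝ 1 χ) (hχsupp : HasCompactSupport χ)
    (hm0 : ∫ ω, χ ω = 1) (hm1 : (∫ ω, ω * χ ω) = 0) (hm2 : (∫ ω, ω ^ 2 * χ ω) = 1)
    (hj0 : (∫ ω, deriv χ ω) = 0) (hj1 : (∫ ω, ω * deriv χ ω) = -1)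
    (hj2 : (∫ ω, ω ^ 2 * deriv χ ω) = 0) (hj3 : (∫ ω, ω ^ 3 * deriv χ ω) = -3)
    (a b uu : ℝ → ℝ → ℝ) (MM : ℝ → ℝ → ℝ → ℝ)
    (hMM : ∀ t x ξ, MM t x ξ = a t x / b t x * χ ((ξ - uu t x) / b t x))
    (t x : ℝ) (φ at' ax' bt' bx' ut' ux' : ℝ)
    (hat : HasDerivAt (fun s => a s x) at' t) (hax : HasDerivAt (fun y => a t y) ax' x)
    (hbt : HasDerivAt (fun s => b s x) bt' t) (hbx : HasDerivAt (fun y => b t y) bx' x)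
    (hut : HasDerivAt (fun s => uu s x) ut' t) (hux : HasDerivAt (fun y => uu t y) ux' x)
    (hb : 0 < b t x) :
    ((∫ ξ, (kt MM t x ξ + ξ * kx MM t x ξ + φ * kv MM t x ξ))
        = at' + uu t x * ax' + a t x * ux')
    ∧ ((∫ ξ, ξ * (kt MM t x ξ + ξ * kx MM t x ξ + φ * kv MM t x ξ))
        = uu t x * at' + a t x * ut' + uu t x ^ 2 * ax' + 2 * a t x * uu t x * ux'
          + b t x ^ 2 * ax' + 2 * a t x * b t x * bx' - a t x * φ) := by
  have hχc : Continuous χ := hχreg.continuous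
  have hχ'c : Continuous (deriv χ) := hχreg.continuous_deriv le_rfl
  have hBne : b t x ≠ 0 := ne_of_gt hb
  set Av := a t x with hAv
  set Bv := b t x with hBv
  set Uv := uu t x with hUv
  set c0 : ℝ := (at' * Bv - Av * bt') / Bv ^ 2 + Uv * ((ax' * Bv - Av * bx') / Bv ^ 2) with hc0
  set c1 : ℝ := Bv * ((ax' * Bv - Av * bx') / Bv ^ 2) with hc1
  set d0 : ℝ := Av / Bv ^ 2 * (φ - ut' - Uv * ux') with hd0
  set d1 : ℝ := Av / Bv ^ 2 * (-bt' - Uv * bx' - Bv * ux') with hd1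
  set d2 : ℝ := -(Av / Bv) * bx' with hd2
  set F : ℝ → ℝ := fun ω => c0 * χ ω + c1 * (ω * χ ω) + d0 * deriv χ ω
      + d1 * (ω * deriv χ ω) + d2 * (ω ^ 2 * deriv χ ω) with hF
  set H : ℝ → ℝ := fun ω => c0 * (ω * χ ω) + c1 * (ω ^ 2 * χ ω) + d0 * (ω * deriv χ ω)
      + d1 * (ω ^ 2 * deriv χ ω) + d2 * (ω ^ 3 * deriv χ ω) with hH
  -- pointwise identity
  have hpoint : ∀ ξ : ℝ, kt MM t x ξ + ξ * kx MM t x ξ + φ * kv MM t x ξ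
      = F ((ξ - Uv) / Bv) := by
    intro ξ
    have hkt : kt MM t x ξ = (at' * Bv - Av * bt') / Bv ^ 2 * χ ((ξ - Uv) / Bv)
        + Av / Bv * (deriv χ ((ξ - Uv) / Bv)
          * ((-ut' * Bv - (ξ - Uv) * bt') / Bv ^ 2)) := by
      have e1 : (fun s => MM s x ξ)
          = fun s => (fun s => a s x) s / (fun s => b s x) s
              * χ ((ξ - (fun s => uu s x) s) / (fun s => b s x) s) :=
        funext fun s => hMM s x ξ
      have h := tl_gibbs_hasDerivAt hχreg hat hbt hut hBne ξ
      show deriv (fun s => MM s x ξ) t = _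
      rw [e1]
      exact h.deriv
    have hkx : kx MM t x ξ = (ax' * Bv - Av * bx') / Bv ^ 2 * χ ((ξ - Uv) / Bv)
        + Av / Bv * (deriv χ ((ξ - Uv) / Bv)
          * ((-ux' * Bv - (ξ - Uv) * bx') / Bv ^ 2)) := by
      have e1 : (fun y => MM t y ξ)
          = fun y => (fun y => a t y) y / (fun y => b t y) y
              * χ ((ξ - (fun y => uu t y) y) / (fun y => b t y) y) :=
        funext fun y => hMM t y ξ
      have h := tl_gibbs_hasDerivAt hχreg hax hbx hux hBne ξ
      show deriv (fun y => MM t y ξ) x = _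
      rw [e1]
      exact h.deriv
    have hkv : kv MM t x ξ = Av / Bv * (deriv χ ((ξ - Uv) / Bv) * (1 / Bv)) := by
      have e1 : (fun ζ => MM t x ζ) = fun ζ => Av / Bv * χ ((ζ - Uv) / Bv) :=
        funext fun ζ => hMM t x ζ
      have h := tl_gibbs_hasDerivAt_v hχreg Av Bv Uv hBne ξ
      show deriv (fun ζ => MM t x ζ) ξ = _
      rw [e1]
      exact h.deriv
    rw [hkt, hkx, hkv, hF]
    simp only [hc0, hc1, hd0, hd1, hd2]
    field_simp
    ring
  -- integrability
  have int_chi : Integrable χ := hχc.integrable_of_hasCompactSupport hχsupp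
  have i1 : Integrable (fun ω : ℝ => c0 * χ ω) := int_chi.const_mul c0
  have i2 : Integrable (fun ω : ℝ => c1 * (ω * χ ω)) :=
    (tl_integrable_mul hχc hχsupp continuous_id).const_mul c1
  have i3 : Integrable (fun ω : ℝ => d0 * deriv χ ω) :=
    (hχ'c.integrable_of_hasCompactSupport hχsupp.deriv).const_mul d0
  have i4 : Integrable (fun ω : ℝ => d1 * (ω * deriv χ ω)) :=
    (tl_integrable_mul hχ'c hχsupp.deriv continuous_id).const_mul d1
  have i5 : Integrable (fun ω : ℝ => d2 * (ω ^ 2 * deriv χ ω)) :=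
    (tl_integrable_mul hχ'c hχsupp.deriv (continuous_pow 2)).const_mul d2
  have hFint : Integrable F := ((((i1.add i2).add i3).add i4).add i5)
  have j1 : Integrable (fun ω : ℝ => c0 * (ω * χ ω)) :=
    (tl_integrable_mul hχc hχsupp continuous_id).const_mul c0
  have j2 : Integrable (fun ω : ℝ => c1 * (ω ^ 2 * χ ω)) :=
    (tl_integrable_mul hχc hχsupp (continuous_pow 2)).const_mul c1
  have j3 : Integrable (fun ω : ℝ => d0 * (ω * deriv χ ω)) :=
    (tl_integrable_mul hχ'c hχsupp.deriv continuous_id).const_mul d0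
  have j4 : Integrable (fun ω : ℝ => d1 * (ω ^ 2 * deriv χ ω)) :=
    (tl_integrable_mul hχ'c hχsupp.deriv (continuous_pow 2)).const_mul d1
  have j5 : Integrable (fun ω : ℝ => d2 * (ω ^ 3 * deriv χ ω)) :=
    (tl_integrable_mul hχ'c hχsupp.deriv (continuous_pow 3)).const_mul d2
  have hHint : Integrable H := ((((j1.add j2).add j3).add j4).add j5)
  -- integral of F
  have h12 : Integrable (fun ω : ℝ => c0 * χ ω + c1 * (ω * χ ω)) := i1.add i2
  have h123 : Integrable (fun ω : ℝ => c0 * χ ω + c1 * (ω * χ ω) + d0 * deriv χ ω) :=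
    h12.add i3
  have h1234 : Integrable (fun ω : ℝ => c0 * χ ω + c1 * (ω * χ ω) + d0 * deriv χ ω
      + d1 * (ω * deriv χ ω)) := h123.add i4
  have hFval : (∫ ω, F ω) = c0 - d1 := by
    have e1 : (∫ ω, F ω) = (∫ ω, (c0 * χ ω + c1 * (ω * χ ω) + d0 * deriv χ ω
        + d1 * (ω * deriv χ ω))) + ∫ ω, d2 * (ω ^ 2 * deriv χ ω) := integral_add h1234 i5
    have e2 : (∫ ω, (c0 * χ ω + c1 * (ω * χ ω) + d0 * deriv χ ω + d1 * (ω * deriv χ ω)))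
        = (∫ ω, (c0 * χ ω + c1 * (ω * χ ω) + d0 * deriv χ ω)) + ∫ ω, d1 * (ω * deriv χ ω) :=
      integral_add h123 i4
    have e3 : (∫ ω, (c0 * χ ω + c1 * (ω * χ ω) + d0 * deriv χ ω))
        = (∫ ω, (c0 * χ ω + c1 * (ω * χ ω))) + ∫ ω, d0 * deriv χ ω := integral_add h12 i3
    have e4 : (∫ ω, (c0 * χ ω + c1 * (ω * χ ω)))
        = (∫ ω, c0 * χ ω) + ∫ ω, c1 * (ω * χ ω) := integral_add i1 i2
    have f1 : (∫ ω, c0 * χ ω) = c0 * ∫ ω, χ ω := integral_const_mul c0 χ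
    have f2 : (∫ ω, c1 * (ω * χ ω)) = c1 * ∫ ω, ω * χ ω :=
      integral_const_mul c1 (fun ω => ω * χ ω)
    have f3 : (∫ ω, d0 * deriv χ ω) = d0 * ∫ ω, deriv χ ω := integral_const_mul d0 (deriv χ)
    have f4 : (∫ ω, d1 * (ω * deriv χ ω)) = d1 * ∫ ω, ω * deriv χ ω :=
      integral_const_mul d1 (fun ω => ω * deriv χ ω)
    have f5 : (∫ ω, d2 * (ω ^ 2 * deriv χ ω)) = d2 * ∫ ω, ω ^ 2 * deriv χ ω :=
      integral_const_mul d2 (fun ω => ω ^ 2 * deriv χ ω)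
    rw [e1, e2, e3, e4, f1, f2, f3, f4, f5, hm0, hm1, hj0, hj1, hj2]
    ring
  have g12 : Integrable (fun ω : ℝ => c0 * (ω * χ ω) + c1 * (ω ^ 2 * χ ω)) := j1.add j2
  have g123 : Integrable (fun ω : ℝ => c0 * (ω * χ ω) + c1 * (ω ^ 2 * χ ω)
      + d0 * (ω * deriv χ ω)) := g12.add j3
  have g1234 : Integrable (fun ω : ℝ => c0 * (ω * χ ω) + c1 * (ω ^ 2 * χ ω)
      + d0 * (ω * deriv χ ω) + d1 * (ω ^ 2 * deriv χ ω)) := g123.add j4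
  have hHval : (∫ ω, H ω) = c1 - d0 - 3 * d2 := by
    have e1 : (∫ ω, H ω) = (∫ ω, (c0 * (ω * χ ω) + c1 * (ω ^ 2 * χ ω)
        + d0 * (ω * deriv χ ω) + d1 * (ω ^ 2 * deriv χ ω)))
        + ∫ ω, d2 * (ω ^ 3 * deriv χ ω) := integral_add g1234 j5
    have e2 : (∫ ω, (c0 * (ω * χ ω) + c1 * (ω ^ 2 * χ ω) + d0 * (ω * deriv χ ω)
        + d1 * (ω ^ 2 * deriv χ ω)))
        = (∫ ω, (c0 * (ω * χ ω) + c1 * (ω ^ 2 * χ ω) + d0 * (ω * deriv χ ω)))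
          + ∫ ω, d1 * (ω ^ 2 * deriv χ ω) := integral_add g123 j4
    have e3 : (∫ ω, (c0 * (ω * χ ω) + c1 * (ω ^ 2 * χ ω) + d0 * (ω * deriv χ ω)))
        = (∫ ω, (c0 * (ω * χ ω) + c1 * (ω ^ 2 * χ ω))) + ∫ ω, d0 * (ω * deriv χ ω) :=
      integral_add g12 j3
    have e4 : (∫ ω, (c0 * (ω * χ ω) + c1 * (ω ^ 2 * χ ω)))
        = (∫ ω, c0 * (ω * χ ω)) + ∫ ω, c1 * (ω ^ 2 * χ ω) := integral_add j1 j2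
    have f1 : (∫ ω, c0 * (ω * χ ω)) = c0 * ∫ ω, ω * χ ω :=
      integral_const_mul c0 (fun ω => ω * χ ω)
    have f2 : (∫ ω, c1 * (ω ^ 2 * χ ω)) = c1 * ∫ ω, ω ^ 2 * χ ω :=
      integral_const_mul c1 (fun ω => ω ^ 2 * χ ω)
    have f3 : (∫ ω, d0 * (ω * deriv χ ω)) = d0 * ∫ ω, ω * deriv χ ω :=
      integral_const_mul d0 (fun ω => ω * deriv χ ω)
    have f4 : (∫ ω, d1 * (ω ^ 2 * deriv χ ω)) = d1 * ∫ ω, ω ^ 2 * deriv χ ω :=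
      integral_const_mul d1 (fun ω => ω ^ 2 * deriv χ ω)
    have f5 : (∫ ω, d2 * (ω ^ 3 * deriv χ ω)) = d2 * ∫ ω, ω ^ 3 * deriv χ ω :=
      integral_const_mul d2 (fun ω => ω ^ 3 * deriv χ ω)
    rw [e1, e2, e3, e4, f1, f2, f3, f4, f5, hm1, hm2, hj1, hj2, hj3]
    ring
  constructor
  · have h0 : (∫ ξ, (kt MM t x ξ + ξ * kx MM t x ξ + φ * kv MM t x ξ))
        = Bv * ∫ ω, F ω := by
      simp_rw [hpoint]
      exact tl_integral_comp_affine hFint hb Uv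
    rw [h0, hFval, hc0, hd1]
    field_simp
    ring
  · set G : ℝ → ℝ := fun ω => Uv * F ω + Bv * H ω with hG
    have hGint : Integrable G := (hFint.const_mul Uv).add (hHint.const_mul Bv)
    have hHF : ∀ ω : ℝ, H ω = ω * F ω := by
      intro ω; rw [hF, hH]; ring
    have hpoint1 : ∀ ξ : ℝ, ξ * (kt MM t x ξ + ξ * kx MM t x ξ + φ * kv MM t x ξ)
        = G ((ξ - Uv) / Bv) := by
      intro ξ
      have hxi : Uv + Bv * ((ξ - Uv) / Bv) = ξ := by field_simp; ring
      rw [hpoint ξ, hG]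
      show ξ * F ((ξ - Uv) / Bv) = Uv * F ((ξ - Uv) / Bv) + Bv * H ((ξ - Uv) / Bv)
      rw [hHF ((ξ - Uv) / Bv)]
      calc ξ * F ((ξ - Uv) / Bv) = (Uv + Bv * ((ξ - Uv) / Bv)) * F ((ξ - Uv) / Bv) := by
            rw [hxi]
        _ = Uv * F ((ξ - Uv) / Bv) + Bv * ((ξ - Uv) / Bv * F ((ξ - Uv) / Bv)) := by ring
    have h1 : (∫ ξ, ξ * (kt MM t x ξ + ξ * kx MM t x ξ + φ * kv MM t x ξ))
        = Bv * ∫ ω, G ω := by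
      simp_rw [hpoint1]
      exact tl_integral_comp_affine hGint hb Uv
    have hGval : (∫ ω, G ω) = Uv * (c0 - d1) + Bv * (c1 - d0 - 3 * d2) := by
      rw [hG, integral_add (hFint.const_mul Uv) (hHint.const_mul Bv),
          integral_const_mul, integral_const_mul, hFval, hHval]
    rw [h1, hGval, hc0, hc1, hd0, hd1, hd2]
    field_simp
    ring
set_option maxHeartbeats 1000000 in
/-- if the Gibbs equilibria `ℳ_a`, `ℳ_w` satisfy the kinetic
transport equations with collision terms `K_a`, `K_w` whose zeroth and first
moments in `ξ` vanish for a.e. `(t, x)`, then `(M, D, A, Q)` solves the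
two-layer system. -/
theorem kinetic_formulation_implies_macroscopic_system
    (χ : ℝ → ℝ) (hχreg : ContDiff ℝ 1 χ) (hχsupp : HasCompactSupport χ)
    (hχeven : ∀ ω, χ ω = χ (-ω)) (hχpos : ∀ ω, 0 ≤ χ ω)
    (hχnorm : ∫ ω, χ ω = 1) (hχsecond : ∫ ω, ω ^ 2 * χ ω = 1)
    (γ k ρ₀ g θ : ℝ) (hγ : 1 < γ) (hk : 0 < k) (hρ₀ : 0 < ρ₀) (hg : 0 < g)
    (S Z : ℝ → ℝ) (hSreg : ContDiff ℝ 1 S) (hZreg : ContDiff ℝ 1 Z)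
    (I₁ I₂ : ℝ → ℝ → ℝ)
    (hI₁reg : ContDiff ℝ 1 (Function.uncurry I₁))
    (hI₂reg : ContDiff ℝ 1 (Function.uncurry I₂))
    (M D A Q : ℝ → ℝ → ℝ)
    (hMreg : ContDiff ℝ 1 (Function.uncurry M))
    (hDreg : ContDiff ℝ 1 (Function.uncurry D))
    (hAreg : ContDiff ℝ 1 (Function.uncurry A))
    (hQreg : ContDiff ℝ 1 (Function.uncurry Q))
    (hMpos : ∀ t x, 0 < M t x) (hApos : ∀ t x, 0 < A t x)
    (hSA : ∀ t x, 0 < S x - A t x)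
    (ca2 : ℝ → ℝ → ℝ)
    (hca2 : ∀ t x, ca2 t x = k * γ * (ρ₀ * M t x / (S x - A t x)) ^ (γ - 1))
    (v u : ℝ → ℝ → ℝ)
    (hv : ∀ t x, v t x = D t x / M t x)
    (hu : ∀ t x, u t x = Q t x / A t x)
    (ba bw : ℝ → ℝ → ℝ)
    (hba : ∀ t x, ba t x = Real.sqrt (ca2 t x / γ))
    (hbw2pos : ∀ t x, 0 < g * I₁ t x / A t x * Real.cos θ
        + ca2 t x * M t x / (γ * (S x - A t x)))
    (hbw : ∀ t x, bw t x = Real.sqrt (g * I₁ t x / A t x * Real.cos θ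
        + ca2 t x * M t x / (γ * (S x - A t x))))
    (Ma Mw : ℝ → ℝ → ℝ → ℝ)
    (hMa : ∀ t x ξ, Ma t x ξ = M t x / ba t x * χ ((ξ - v t x) / ba t x))
    (hMw : ∀ t x ξ, Mw t x ξ = A t x / bw t x * χ ((ξ - u t x) / bw t x))
    (φa φw : ℝ → ℝ → ℝ)
    (hφa : ∀ t x, φa t x
        = ca2 t x / (γ * (S x - A t x)) * px (fun t x => S x - A t x) t x)
    (hφw : ∀ t x, φw t x
        = -g * deriv Z x + g * I₂ t x / A t x * Real.cos θ
          + ca2 t x * M t x / (γ * (S x - A t x)) * (px A t x / A t x))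
    (Ka Kw : ℝ → ℝ → ℝ → ℝ)
    (hKa : ∀ t x ξ, kt Ma t x ξ + ξ * kx Ma t x ξ + φa t x * kv Ma t x ξ
        = Ka t x ξ)
    (hKw : ∀ t x ξ, kt Mw t x ξ + ξ * kx Mw t x ξ + φw t x * kv Mw t x ξ
        = Kw t x ξ)
    (hKmom : ∀ᵐ p : ℝ × ℝ, (∫ ξ, Ka p.1 p.2 ξ = 0) ∧ (∫ ξ, ξ * Ka p.1 p.2 ξ = 0)
        ∧ (∫ ξ, Kw p.1 p.2 ξ = 0) ∧ (∫ ξ, ξ * Kw p.1 p.2 ξ = 0)) :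
    (∀ t x, pt M t x + px D t x = 0)
    ∧ (∀ t x,
        pt D t x + px (fun t x => D t x ^ 2 / M t x + M t x * ca2 t x / γ) t x
          = M t x * ca2 t x / (γ * (S x - A t x))
              * px (fun t x => S x - A t x) t x)
    ∧ (∀ t x, pt A t x + px Q t x = 0)
    ∧ (∀ t x,
        pt Q t x + px (fun t x => Q t x ^ 2 / A t x + g * I₁ t x * Real.cos θ
            + A t x * (M t x * ca2 t x / (γ * (S x - A t x)))) t x
          = -g * A t x * deriv Z x + g * I₂ t x * Real.cos θ
            + M t x * ca2 t x / (γ * (S x - A t x)) * px A t x) := by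
  have hγ0 : (0:ℝ) < γ := lt_trans zero_lt_one hγ
  have hca2pos : ∀ t x, 0 < ca2 t x := by
    intro t x
    rw [hca2 t x]
    exact mul_pos (mul_pos hk hγ0)
      (Real.rpow_pos_of_pos (div_pos (mul_pos hρ₀ (hMpos t x)) (hSA t x)) _)
  have hbapos : ∀ t x, 0 < ba t x := by
    intro t x; rw [hba t x]
    exact Real.sqrt_pos.mpr (div_pos (hca2pos t x) hγ0)
  have hbwpos : ∀ t x, 0 < bw t x := by
    intro t x; rw [hbw t x]; exact Real.sqrt_pos.mpr (hbw2pos t x)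
  -- χ moments
  have hm1 : (∫ ω, ω * χ ω) = 0 := by
    apply tl_integral_odd (f := fun ω => ω * χ ω)
    intro ω
    show -ω * χ (-ω) = -(ω * χ ω)
    rw [← hχeven ω]; ring
  have hj0 : (∫ ω, deriv χ ω) = 0 := tl_integral_deriv_eq_zero hχreg hχsupp
  have hj1 : (∫ ω, ω * deriv χ ω) = -1 := by
    have h := tl_integral_pow_mul_deriv hχreg hχsupp 0
    simp only [Nat.reduceAdd, pow_one, pow_zero, one_mul, Nat.cast_zero, zero_add,
      hχnorm] at h
    rw [h]; norm_num
  have hj2 : (∫ ω, ω ^ 2 * deriv χ ω) = 0 := by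
    have h := tl_integral_pow_mul_deriv hχreg hχsupp 1
    simp only [Nat.reduceAdd, pow_one, Nat.cast_one, hm1] at h
    rw [h]; ring
  have hj3 : (∫ ω, ω ^ 3 * deriv χ ω) = -3 := by
    have h := tl_integral_pow_mul_deriv hχreg hχsupp 2
    simp only [Nat.reduceAdd, Nat.cast_ofNat, hχsecond] at h
    rw [h]; norm_num
  -- AIR layer key identities
  have keyAir : ∀ t x,
      ((∫ ξ, (kt Ma t x ξ + ξ * kx Ma t x ξ + φa t x * kv Ma t x ξ))
          = pt M t x + px D t x)
      ∧ ((∫ ξ, ξ * (kt Ma t x ξ + ξ * kx Ma t x ξ + φa t x * kv Ma t x ξ))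
          = pt D t x + px (fun t x => D t x ^ 2 / M t x + M t x * ca2 t x / γ) t x
            - M t x * ca2 t x / (γ * (S x - A t x))
                * px (fun t x => S x - A t x) t x) := by
    intro t x
    have hMt : HasDerivAt (fun s => M s x) (pt M t x) t :=
      (tl_sliceT_diff hMreg t x).hasDerivAt
    have hMx : HasDerivAt (fun y => M t y) (px M t x) x :=
      (tl_sliceX_diff hMreg t x).hasDerivAt
    have hvTfun : (fun s => v s x) = fun s => D s x / M s x := funext fun s => hv s x
    have hvXfun : (fun y => v t y) = fun y => D t y / M t y := funext fun y => hv t y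
    have hvdT : DifferentiableAt ℝ (fun s => v s x) t := by
      rw [hvTfun]
      exact (tl_sliceT_diff hDreg t x).div (tl_sliceT_diff hMreg t x) (hMpos t x).ne'
    have hvdX : DifferentiableAt ℝ (fun y => v t y) x := by
      rw [hvXfun]
      exact (tl_sliceX_diff hDreg t x).div (tl_sliceX_diff hMreg t x) (hMpos t x).ne'
    have hvt : HasDerivAt (fun s => v s x) (deriv (fun s => v s x) t) t := hvdT.hasDerivAt
    have hvx : HasDerivAt (fun y => v t y) (deriv (fun y => v t y) x) x := hvdX.hasDerivAt
    have hca2Tfun : (fun s => ca2 s x)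
        = fun s => k * γ * (ρ₀ * M s x / (S x - A s x)) ^ (γ - 1) :=
      funext fun s => hca2 s x
    have hca2Xfun : (fun y => ca2 t y)
        = fun y => k * γ * (ρ₀ * M t y / (S y - A t y)) ^ (γ - 1) :=
      funext fun y => hca2 t y
    have hbaseT : DifferentiableAt ℝ (fun s => ρ₀ * M s x / (S x - A s x)) t :=
      ((tl_sliceT_diff hMreg t x).const_mul ρ₀).div
        ((differentiableAt_const (S x)).sub (tl_sliceT_diff hAreg t x)) (hSA t x).ne'
    have hbaseX : DifferentiableAt ℝ (fun y => ρ₀ * M t y / (S y - A t y)) x :=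
      ((tl_sliceX_diff hMreg t x).const_mul ρ₀).div
        (((hSreg.differentiable one_ne_zero) x).sub (tl_sliceX_diff hAreg t x)) (hSA t x).ne'
    have hca2dT : DifferentiableAt ℝ (fun s => ca2 s x) t := by
      rw [hca2Tfun]
      exact (hbaseT.rpow_const
        (Or.inl (div_pos (mul_pos hρ₀ (hMpos t x)) (hSA t x)).ne')).const_mul (k * γ)
    have hca2dX : DifferentiableAt ℝ (fun y => ca2 t y) x := by
      rw [hca2Xfun]
      exact (hbaseX.rpow_const
        (Or.inl (div_pos (mul_pos hρ₀ (hMpos t x)) (hSA t x)).ne')).const_mul (k * γ)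
    have hbaTfun : (fun s => ba s x) = fun s => Real.sqrt (ca2 s x / γ) :=
      funext fun s => hba s x
    have hbaXfun : (fun y => ba t y) = fun y => Real.sqrt (ca2 t y / γ) :=
      funext fun y => hba t y
    have hbadT : DifferentiableAt ℝ (fun s => ba s x) t := by
      rw [hbaTfun]
      exact (hca2dT.div_const γ).sqrt (div_pos (hca2pos t x) hγ0).ne'
    have hbadX : DifferentiableAt ℝ (fun y => ba t y) x := by
      rw [hbaXfun]
      exact (hca2dX.div_const γ).sqrt (div_pos (hca2pos t x) hγ0).ne'
    have hbat : HasDerivAt (fun s => ba s x) (deriv (fun s => ba s x) t) t :=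
      hbadT.hasDerivAt
    have hbax : HasDerivAt (fun y => ba t y) (deriv (fun y => ba t y) x) x :=
      hbadX.hasDerivAt
    have hmom := tl_layer_moments hχreg hχsupp hχnorm hm1 hχsecond hj0 hj1 hj2 hj3
      M ba v Ma hMa t x (φa t x) (pt M t x) (px M t x)
      (deriv (fun s => ba s x) t) (deriv (fun y => ba t y) x)
      (deriv (fun s => v s x) t) (deriv (fun y => v t y) x)
      hMt hMx hbat hbax hvt hvx (hbapos t x)
    have hDXfun : (fun y => D t y) = fun y => M t y * v t y := funext fun y => by
      rw [hv t y]; field_simp [(hMpos t y).ne']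
    have hDTfun : (fun s => D s x) = fun s => M s x * v s x := funext fun s => by
      rw [hv s x]; field_simp [(hMpos s x).ne']
    have hpxD : px D t x = px M t x * v t x + M t x * deriv (fun y => v t y) x := by
      show deriv (fun y => D t y) x = _
      rw [hDXfun]; exact (hMx.mul hvx).deriv
    have hptD : pt D t x = pt M t x * v t x + M t x * deriv (fun s => v s x) t := by
      show deriv (fun s => D s x) t = _
      rw [hDTfun]; exact (hMt.mul hvt).deriv
    constructor
    · rw [hmom.1, hpxD]; ring
    · have hsq : ∀ y, (ba t y) ^ 2 = ca2 t y / γ := fun y => by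
        rw [hba t y]; exact Real.sq_sqrt (div_pos (hca2pos t y) hγ0).le
      have hFluxfun : (fun y => D t y ^ 2 / M t y + M t y * ca2 t y / γ)
          = fun y => M t y * v t y ^ 2 + M t y * ba t y ^ 2 := funext fun y => by
        rw [hsq y, hv t y]; field_simp [(hMpos t y).ne', hγ0.ne']
      have hder := ((hMx.mul (hvx.pow 2)).add (hMx.mul (hbax.pow 2))).deriv
      simp only [Pi.mul_def, Pi.add_def, Pi.pow_def] at hder
      have hpxFlux : px (fun t x => D t x ^ 2 / M t x + M t x * ca2 t x / γ) t x
          = deriv (fun y => M t y * v t y ^ 2 + M t y * ba t y ^ 2) x := by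
        show deriv (fun y => D t y ^ 2 / M t y + M t y * ca2 t y / γ) x = _
        rw [hFluxfun]
      have hMφ : M t x * φa t x = M t x * ca2 t x / (γ * (S x - A t x))
          * px (fun t x => S x - A t x) t x := by
        rw [hφa t x]; ring
      rw [hmom.2, hptD, hpxFlux, hder, hMφ]
      norm_num
      ring
  -- WATER layer key identities
  have keyWater : ∀ t x,
      ((∫ ξ, (kt Mw t x ξ + ξ * kx Mw t x ξ + φw t x * kv Mw t x ξ))
          = pt A t x + px Q t x)
      ∧ ((∫ ξ, ξ * (kt Mw t x ξ + ξ * kx Mw t x ξ + φw t x * kv Mw t x ξ))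
          = pt Q t x + px (fun t x => Q t x ^ 2 / A t x + g * I₁ t x * Real.cos θ
              + A t x * (M t x * ca2 t x / (γ * (S x - A t x)))) t x
            - (-g * A t x * deriv Z x + g * I₂ t x * Real.cos θ
              + M t x * ca2 t x / (γ * (S x - A t x)) * px A t x)) := by
    intro t x
    have hAt : HasDerivAt (fun s => A s x) (pt A t x) t :=
      (tl_sliceT_diff hAreg t x).hasDerivAt
    have hAx : HasDerivAt (fun y => A t y) (px A t x) x :=
      (tl_sliceX_diff hAreg t x).hasDerivAt
    have huTfun : (fun s => u s x) = fun s => Q s x / A s x := funext fun s => hu s x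
    have huXfun : (fun y => u t y) = fun y => Q t y / A t y := funext fun y => hu t y
    have hudT : DifferentiableAt ℝ (fun s => u s x) t := by
      rw [huTfun]
      exact (tl_sliceT_diff hQreg t x).div (tl_sliceT_diff hAreg t x) (hApos t x).ne'
    have hudX : DifferentiableAt ℝ (fun y => u t y) x := by
      rw [huXfun]
      exact (tl_sliceX_diff hQreg t x).div (tl_sliceX_diff hAreg t x) (hApos t x).ne'
    have hut : HasDerivAt (fun s => u s x) (deriv (fun s => u s x) t) t := hudT.hasDerivAt
    have hux : HasDerivAt (fun y => u t y) (deriv (fun y => u t y) x) x := hudX.hasDerivAt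
    have hca2Tfun : (fun s => ca2 s x)
        = fun s => k * γ * (ρ₀ * M s x / (S x - A s x)) ^ (γ - 1) :=
      funext fun s => hca2 s x
    have hca2Xfun : (fun y => ca2 t y)
        = fun y => k * γ * (ρ₀ * M t y / (S y - A t y)) ^ (γ - 1) :=
      funext fun y => hca2 t y
    have hbaseT : DifferentiableAt ℝ (fun s => ρ₀ * M s x / (S x - A s x)) t :=
      ((tl_sliceT_diff hMreg t x).const_mul ρ₀).div
        ((differentiableAt_const (S x)).sub (tl_sliceT_diff hAreg t x)) (hSA t x).ne'
    have hbaseX : DifferentiableAt ℝ (fun y => ρ₀ * M t y / (S y - A t y)) x :=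
      ((tl_sliceX_diff hMreg t x).const_mul ρ₀).div
        (((hSreg.differentiable one_ne_zero) x).sub (tl_sliceX_diff hAreg t x)) (hSA t x).ne'
    have hca2dT : DifferentiableAt ℝ (fun s => ca2 s x) t := by
      rw [hca2Tfun]
      exact (hbaseT.rpow_const
        (Or.inl (div_pos (mul_pos hρ₀ (hMpos t x)) (hSA t x)).ne')).const_mul (k * γ)
    have hca2dX : DifferentiableAt ℝ (fun y => ca2 t y) x := by
      rw [hca2Xfun]
      exact (hbaseX.rpow_const
        (Or.inl (div_pos (mul_pos hρ₀ (hMpos t x)) (hSA t x)).ne')).const_mul (k * γ)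
    have hbwTfun : (fun s => bw s x) = fun s => Real.sqrt (g * I₁ s x / A s x * Real.cos θ
        + ca2 s x * M s x / (γ * (S x - A s x))) := funext fun s => hbw s x
    have hbwXfun : (fun y => bw t y) = fun y => Real.sqrt (g * I₁ t y / A t y * Real.cos θ
        + ca2 t y * M t y / (γ * (S y - A t y))) := funext fun y => hbw t y
    have hinT : DifferentiableAt ℝ (fun s => g * I₁ s x / A s x * Real.cos θ
        + ca2 s x * M s x / (γ * (S x - A s x))) t := by
      refine DifferentiableAt.add ?_ ?_
      · exact ((((tl_sliceT_diff hI₁reg t x).const_mul g).div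
          (tl_sliceT_diff hAreg t x) (hApos t x).ne').mul_const (Real.cos θ))
      · exact (hca2dT.mul (tl_sliceT_diff hMreg t x)).div
          (((differentiableAt_const (S x)).sub (tl_sliceT_diff hAreg t x)).const_mul γ)
          (mul_pos hγ0 (hSA t x)).ne'
    have hinX : DifferentiableAt ℝ (fun y => g * I₁ t y / A t y * Real.cos θ
        + ca2 t y * M t y / (γ * (S y - A t y))) x := by
      refine DifferentiableAt.add ?_ ?_
      · exact ((((tl_sliceX_diff hI₁reg t x).const_mul g).div
          (tl_sliceX_diff hAreg t x) (hApos t x).ne').mul_const (Real.cos θ))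
      · exact (hca2dX.mul (tl_sliceX_diff hMreg t x)).div
          ((((hSreg.differentiable one_ne_zero) x).sub (tl_sliceX_diff hAreg t x)).const_mul γ)
          (mul_pos hγ0 (hSA t x)).ne'
    have hbwdT : DifferentiableAt ℝ (fun s => bw s x) t := by
      rw [hbwTfun]
      exact hinT.sqrt (hbw2pos t x).ne'
    have hbwdX : DifferentiableAt ℝ (fun y => bw t y) x := by
      rw [hbwXfun]
      exact hinX.sqrt (hbw2pos t x).ne'
    have hbwt : HasDerivAt (fun s => bw s x) (deriv (fun s => bw s x) t) t :=
      hbwdT.hasDerivAt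
    have hbwx : HasDerivAt (fun y => bw t y) (deriv (fun y => bw t y) x) x :=
      hbwdX.hasDerivAt
    have hmom := tl_layer_moments hχreg hχsupp hχnorm hm1 hχsecond hj0 hj1 hj2 hj3
      A bw u Mw hMw t x (φw t x) (pt A t x) (px A t x)
      (deriv (fun s => bw s x) t) (deriv (fun y => bw t y) x)
      (deriv (fun s => u s x) t) (deriv (fun y => u t y) x)
      hAt hAx hbwt hbwx hut hux (hbwpos t x)
    have hQXfun : (fun y => Q t y) = fun y => A t y * u t y := funext fun y => by
      rw [hu t y]; field_simp [(hApos t y).ne']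
    have hQTfun : (fun s => Q s x) = fun s => A s x * u s x := funext fun s => by
      rw [hu s x]; field_simp [(hApos s x).ne']
    have hpxQ : px Q t x = px A t x * u t x + A t x * deriv (fun y => u t y) x := by
      show deriv (fun y => Q t y) x = _
      rw [hQXfun]; exact (hAx.mul hux).deriv
    have hptQ : pt Q t x = pt A t x * u t x + A t x * deriv (fun s => u s x) t := by
      show deriv (fun s => Q s x) t = _
      rw [hQTfun]; exact (hAt.mul hut).deriv
    constructor
    · rw [hmom.1, hpxQ]; ring
    · have hsq : ∀ y, (bw t y) ^ 2 = g * I₁ t y / A t y * Real.cos θ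
          + ca2 t y * M t y / (γ * (S y - A t y)) := fun y => by
        rw [hbw t y]; exact Real.sq_sqrt (hbw2pos t y).le
      have hFluxfun : (fun y => Q t y ^ 2 / A t y + g * I₁ t y * Real.cos θ
            + A t y * (M t y * ca2 t y / (γ * (S y - A t y))))
          = fun y => A t y * u t y ^ 2 + A t y * bw t y ^ 2 := funext fun y => by
        rw [hsq y, hu t y]
        field_simp [(hApos t y).ne', (hSA t y).ne', hγ0.ne']
        ring
      have hder := ((hAx.mul (hux.pow 2)).add (hAx.mul (hbwx.pow 2))).deriv
      simp only [Pi.mul_def, Pi.add_def, Pi.pow_def] at hder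
      have hpxFlux : px (fun t x => Q t x ^ 2 / A t x + g * I₁ t x * Real.cos θ
            + A t x * (M t x * ca2 t x / (γ * (S x - A t x)))) t x
          = deriv (fun y => A t y * u t y ^ 2 + A t y * bw t y ^ 2) x := by
        show deriv (fun y => Q t y ^ 2 / A t y + g * I₁ t y * Real.cos θ
            + A t y * (M t y * ca2 t y / (γ * (S y - A t y)))) x = _
        rw [hFluxfun]
      have hAφ : A t x * φw t x = -g * A t x * deriv Z x + g * I₂ t x * Real.cos θ
          + M t x * ca2 t x / (γ * (S x - A t x)) * px A t x := by
        rw [hφw t x]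
        field_simp [(hApos t x).ne', (hSA t x).ne', hγ0.ne']
      rw [hmom.2, hptQ, hpxFlux, hder, hAφ]
      norm_num
      ring
  -- continuity of residuals
  have hca2u : ContDiff ℝ 1 (fun p : ℝ × ℝ => ca2 p.1 p.2) := by
    have he : (fun p : ℝ × ℝ => ca2 p.1 p.2)
        = fun p : ℝ × ℝ => k * γ * (ρ₀ * M p.1 p.2 / (S p.2 - A p.1 p.2)) ^ (γ - 1) :=
      funext fun p => hca2 p.1 p.2
    rw [he, contDiff_iff_contDiffAt]
    intro p
    have hbase : ContDiffAt ℝ 1 (fun p : ℝ × ℝ => ρ₀ * M p.1 p.2 / (S p.2 - A p.1 p.2)) p :=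
      (contDiffAt_const.mul hMreg.contDiffAt).div
        ((hSreg.comp contDiff_snd).contDiffAt.sub hAreg.contDiffAt) (hSA p.1 p.2).ne'
    exact contDiffAt_const.mul (hbase.rpow_const_of_ne
      (div_pos (mul_pos hρ₀ (hMpos p.1 p.2)) (hSA p.1 p.2)).ne')
  have hFluxDu : ContDiff ℝ 1
      (Function.uncurry (fun t x => D t x ^ 2 / M t x + M t x * ca2 t x / γ)) := by
    rw [contDiff_iff_contDiffAt]
    intro p
    exact ((hDreg.contDiffAt.pow 2).div hMreg.contDiffAt (hMpos p.1 p.2).ne').add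
      ((hMreg.contDiffAt.mul hca2u.contDiffAt).div_const γ)
  have hFluxWu : ContDiff ℝ 1
      (Function.uncurry (fun t x => Q t x ^ 2 / A t x + g * I₁ t x * Real.cos θ
        + A t x * (M t x * ca2 t x / (γ * (S x - A t x))))) := by
    rw [contDiff_iff_contDiffAt]
    intro p
    refine ContDiffAt.add (ContDiffAt.add ?_ ?_) ?_
    · exact (hQreg.contDiffAt.pow 2).div hAreg.contDiffAt (hApos p.1 p.2).ne'
    · exact (contDiffAt_const.mul hI₁reg.contDiffAt).mul contDiffAt_const
    · exact hAreg.contDiffAt.mul ((hMreg.contDiffAt.mul hca2u.contDiffAt).div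
        (contDiffAt_const.mul ((hSreg.comp contDiff_snd).contDiffAt.sub hAreg.contDiffAt))
        (mul_pos hγ0 (hSA p.1 p.2)).ne')
  have hSAu : ContDiff ℝ 1 (Function.uncurry (fun t x : ℝ => S x - A t x)) := by
    exact (hSreg.comp contDiff_snd).sub hAreg
  have hMcont : Continuous (fun p : ℝ × ℝ => M p.1 p.2) := hMreg.continuous
  have hAcont : Continuous (fun p : ℝ × ℝ => A p.1 p.2) := hAreg.continuous
  have hI₂cont : Continuous (fun p : ℝ × ℝ => I₂ p.1 p.2) := hI₂reg.continuous
  have hScont : Continuous (fun p : ℝ × ℝ => S p.2) :=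
    hSreg.continuous.comp continuous_snd
  have hcoef : Continuous (fun p : ℝ × ℝ =>
      M p.1 p.2 * ca2 p.1 p.2 / (γ * (S p.2 - A p.1 p.2))) := by
    apply (hMcont.mul hca2u.continuous).div (continuous_const.mul (hScont.sub hAcont))
    intro p
    exact (mul_pos hγ0 (hSA p.1 p.2)).ne'
  have hR1 : Continuous (fun p : ℝ × ℝ => pt M p.1 p.2 + px D p.1 p.2) :=
    (tl_pt_cont hMreg).add (tl_px_cont hDreg)
  have hR2 : Continuous (fun p : ℝ × ℝ => pt D p.1 p.2
      + px (fun t x => D t x ^ 2 / M t x + M t x * ca2 t x / γ) p.1 p.2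
      - M p.1 p.2 * ca2 p.1 p.2 / (γ * (S p.2 - A p.1 p.2))
          * px (fun t x => S x - A t x) p.1 p.2) :=
    ((tl_pt_cont hDreg).add (tl_px_cont hFluxDu)).sub (hcoef.mul (tl_px_cont hSAu))
  have hR3 : Continuous (fun p : ℝ × ℝ => pt A p.1 p.2 + px Q p.1 p.2) :=
    (tl_pt_cont hAreg).add (tl_px_cont hQreg)
  have hR4 : Continuous (fun p : ℝ × ℝ => pt Q p.1 p.2
      + px (fun t x => Q t x ^ 2 / A t x + g * I₁ t x * Real.cos θ
          + A t x * (M t x * ca2 t x / (γ * (S x - A t x)))) p.1 p.2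
      - (-g * A p.1 p.2 * deriv Z p.2 + g * I₂ p.1 p.2 * Real.cos θ
        + M p.1 p.2 * ca2 p.1 p.2 / (γ * (S p.2 - A p.1 p.2)) * px A p.1 p.2)) := by
    refine ((tl_pt_cont hQreg).add (tl_px_cont hFluxWu)).sub ?_
    refine Continuous.add (Continuous.add ?_ ?_) ?_
    · exact (continuous_const.mul hAcont).mul
        ((hZreg.continuous_deriv le_rfl).comp continuous_snd)
    · exact (continuous_const.mul hI₂cont).mul continuous_const
    · exact hcoef.mul (tl_px_cont hAreg)
  -- almost-everywhere vanishing implies everywhere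
  have haeR1 : (fun p : ℝ × ℝ => pt M p.1 p.2 + px D p.1 p.2)
      =ᵐ[volume] fun _ => (0:ℝ) := by
    filter_upwards [hKmom] with p hp
    have hfun : (fun ξ => Ka p.1 p.2 ξ)
        = fun ξ => kt Ma p.1 p.2 ξ + ξ * kx Ma p.1 p.2 ξ + φa p.1 p.2 * kv Ma p.1 p.2 ξ :=
      funext fun ξ => (hKa p.1 p.2 ξ).symm
    have h0 := hp.1
    rw [show (∫ ξ, Ka p.1 p.2 ξ)
        = ∫ ξ, (kt Ma p.1 p.2 ξ + ξ * kx Ma p.1 p.2 ξ + φa p.1 p.2 * kv Ma p.1 p.2 ξ)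
        from by rw [← hfun]] at h0
    rw [(keyAir p.1 p.2).1] at h0
    exact h0
  have haeR2 : (fun p : ℝ × ℝ => pt D p.1 p.2
      + px (fun t x => D t x ^ 2 / M t x + M t x * ca2 t x / γ) p.1 p.2
      - M p.1 p.2 * ca2 p.1 p.2 / (γ * (S p.2 - A p.1 p.2))
          * px (fun t x => S x - A t x) p.1 p.2) =ᵐ[volume] fun _ => (0:ℝ) := by
    filter_upwards [hKmom] with p hp
    have hfun : (fun ξ => ξ * Ka p.1 p.2 ξ)
        = fun ξ => ξ * (kt Ma p.1 p.2 ξ + ξ * kx Ma p.1 p.2 ξ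
            + φa p.1 p.2 * kv Ma p.1 p.2 ξ) :=
      funext fun ξ => by rw [hKa p.1 p.2 ξ]
    have h0 := hp.2.1
    rw [show (∫ ξ, ξ * Ka p.1 p.2 ξ)
        = ∫ ξ, ξ * (kt Ma p.1 p.2 ξ + ξ * kx Ma p.1 p.2 ξ + φa p.1 p.2 * kv Ma p.1 p.2 ξ)
        from by rw [← hfun]] at h0
    rw [(keyAir p.1 p.2).2] at h0
    exact h0
  have haeR3 : (fun p : ℝ × ℝ => pt A p.1 p.2 + px Q p.1 p.2)
      =ᵐ[volume] fun _ => (0:ℝ) := by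
    filter_upwards [hKmom] with p hp
    have hfun : (fun ξ => Kw p.1 p.2 ξ)
        = fun ξ => kt Mw p.1 p.2 ξ + ξ * kx Mw p.1 p.2 ξ + φw p.1 p.2 * kv Mw p.1 p.2 ξ :=
      funext fun ξ => (hKw p.1 p.2 ξ).symm
    have h0 := hp.2.2.1
    rw [show (∫ ξ, Kw p.1 p.2 ξ)
        = ∫ ξ, (kt Mw p.1 p.2 ξ + ξ * kx Mw p.1 p.2 ξ + φw p.1 p.2 * kv Mw p.1 p.2 ξ)
        from by rw [← hfun]] at h0
    rw [(keyWater p.1 p.2).1] at h0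
    exact h0
  have haeR4 : (fun p : ℝ × ℝ => pt Q p.1 p.2
      + px (fun t x => Q t x ^ 2 / A t x + g * I₁ t x * Real.cos θ
          + A t x * (M t x * ca2 t x / (γ * (S x - A t x)))) p.1 p.2
      - (-g * A p.1 p.2 * deriv Z p.2 + g * I₂ p.1 p.2 * Real.cos θ
        + M p.1 p.2 * ca2 p.1 p.2 / (γ * (S p.2 - A p.1 p.2)) * px A p.1 p.2))
      =ᵐ[volume] fun _ => (0:ℝ) := by
    filter_upwards [hKmom] with p hp
    have hfun : (fun ξ => ξ * Kw p.1 p.2 ξ)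
        = fun ξ => ξ * (kt Mw p.1 p.2 ξ + ξ * kx Mw p.1 p.2 ξ
            + φw p.1 p.2 * kv Mw p.1 p.2 ξ) :=
      funext fun ξ => by rw [hKw p.1 p.2 ξ]
    have h0 := hp.2.2.2
    rw [show (∫ ξ, ξ * Kw p.1 p.2 ξ)
        = ∫ ξ, ξ * (kt Mw p.1 p.2 ξ + ξ * kx Mw p.1 p.2 ξ + φw p.1 p.2 * kv Mw p.1 p.2 ξ)
        from by rw [← hfun]] at h0
    rw [(keyWater p.1 p.2).2] at h0
    exact h0
  have hZ1 := (Continuous.ae_eq_iff_eq volume hR1 continuous_const).mp haeR1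
  have hZ2 := (Continuous.ae_eq_iff_eq volume hR2 continuous_const).mp haeR2
  have hZ3 := (Continuous.ae_eq_iff_eq volume hR3 continuous_const).mp haeR3
  have hZ4 := (Continuous.ae_eq_iff_eq volume hR4 continuous_const).mp haeR4
  refine ⟨?_, ?_, ?_, ?_⟩
  · intro t x
    exact congrFun hZ1 (t, x)
  · intro t x
    have := congrFun hZ2 (t, x)
    simp only [] at this
    linarith [this]
  · intro t x
    exact congrFun hZ3 (t, x)
  · intro t x
    have := congrFun hZ4 (t, x)
    simp only [] at this
    linarith [this]
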